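/- Fix κ ≥ 0. If A ∈ C²(ℝ, M²) satisfies det A(t) = 1 for all t and solves Ä(t) + κA(t) = λ(t)·cof A(t) for some λ ∈ C⁰(ℝ,ℝ), then λ(t) = (4X₁ + 2X₂² − 2X₃²)/|A(t)|⁴ for all t ∈ ℝ, where Xᵢ = Xᵢ(A(0), Ȧ(0)) for i = 1,2,3. -/

import Mathlib

open Matrix

noncomputable section

/-- `M²`: the space of 2×2 real matrices. -/
abbrev M2 : Type := Matrix (Fin 2) (Fin 2) ℝ

/-- Frobenius inner product `⟨A,B⟩ = tr(AᵀB)`. -/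
def mip (A B : M2) : ℝ := (Aᵀ * B).trace

/-- Frobenius norm `|A| = ⟨A,A⟩^{1/2}`. -/
def fnorm (A : M2) : ℝ := Real.sqrt (mip A A)

/-- The matrix Z = [[0,−1],[1,0]]. -/
def Zm : M2 := !![0, -1; 1, 0]

/-- The matrix K = [[1,0],[0,−1]]. -/
def Km : M2 := !![1, 0; 0, -1]

/-- The matrix M = [[0,1],[1,0]]. -/
def Mm : M2 := !![0, 1; 1, 0]

/-- Cofactor: cof [[a,b],[c,d]] = [[d,−c],[−b,a]]. -/
def cofm (A : M2) : M2 := !![A 1 1, -(A 1 0); -(A 0 1), A 0 0]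

/-- Membership in SO(2,ℝ). -/
def isSO (U : M2) : Prop := U.det = 1 ∧ U⁻¹ = Uᵀ

/-- The rotation U(θ) = cos θ·I + sin θ·Z. -/
def Um (θ : ℝ) : M2 := Real.cos θ • (1 : M2) + Real.sin θ • Zm

/-- Invariant X₁(A,B) = ½|B|² + (κ/2)|A|². -/
def X1 (κ : ℝ) (A B : M2) : ℝ := (1/2) * mip B B + (κ/2) * mip A A

/-- Invariant X₂(A,B) = ½⟨ZA − AZ, B⟩. -/
def X2 (A B : M2) : ℝ := (1/2) * mip (Zm * A - A * Zm) B

/-- Invariant X₃(A,B) = ½⟨ZA + AZ, B⟩. -/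
def X3 (A B : M2) : ℝ := (1/2) * mip (Zm * A + A * Zm) B

/-- Lagrange multiplier Λ(A,B) = 2(κ − det B)/|A|². -/
def Lam (κ : ℝ) (A B : M2) : ℝ := 2 * (κ - B.det) / (mip A A)

attribute [local instance] Matrix.normedAddCommGroup Matrix.normedSpace


lemma mip_entries (M N : M2) :
    mip M N = M 0 0 * N 0 0 + M 0 1 * N 0 1 + M 1 0 * N 1 0 + M 1 1 * N 1 1 := by
  simp [mip, Matrix.trace_fin_two, Matrix.mul_apply, Fin.sum_univ_two, Matrix.transpose_apply]
  ring

lemma X1_entries (κ : ℝ) (M N : M2) : X1 κ M N =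
    (1/2) * (N 0 0 ^ 2 + N 0 1 ^ 2 + N 1 0 ^ 2 + N 1 1 ^ 2)
      + (κ/2) * (M 0 0 ^ 2 + M 0 1 ^ 2 + M 1 0 ^ 2 + M 1 1 ^ 2) := by
  simp [X1, mip_entries]; ring

lemma X2_entries (M N : M2) : X2 M N =
    (1/2) * ((M 0 0 - M 1 1) * (N 0 1 + N 1 0) - (M 0 1 + M 1 0) * (N 0 0 - N 1 1)) := by
  simp [X2, mip_entries, Zm, Matrix.mul_apply, Matrix.vecMul, dotProduct,
    Fin.sum_univ_two, Matrix.sub_apply]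
  ring

lemma X3_entries (M N : M2) : X3 M N =
    (1/2) * ((M 0 1 - M 1 0) * (N 0 0 + N 1 1) + (M 0 0 + M 1 1) * (N 1 0 - N 0 1)) := by
  simp [X3, mip_entries, Zm, Matrix.mul_apply, Matrix.vecMul, dotProduct,
    Fin.sum_univ_two, Matrix.add_apply]
  ring

lemma hasDerivAt_entry {A : ℝ → M2} {A' : M2} {t : ℝ} (h : HasDerivAt A A' t) (i j : Fin 2) :
    HasDerivAt (fun s => A s i j) (A' i j) t :=
  ((LinearMap.toContinuousLinearMap (Matrix.entryLinearMap ℝ ℝ i j)).hasFDerivAt).comp_hasDerivAt t h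


/-- the Lagrange multiplier in terms of the initial invariants. -/
theorem lam_value (κ : ℝ) (hκ : 0 ≤ κ) (A : ℝ → M2) (lam : ℝ → ℝ)
    (hA : ContDiff ℝ 2 A) (hlam : Continuous lam)
    (hdet : ∀ t : ℝ, (A t).det = 1)
    (hode : ∀ t : ℝ, deriv (deriv A) t + κ • A t = lam t • cofm (A t)) :
    ∀ t : ℝ, lam t = (4 * X1 κ (A 0) (deriv A 0) + 2 * X2 (A 0) (deriv A 0) ^ 2
      - 2 * X3 (A 0) (deriv A 0) ^ 2) / (mip (A t) (A t)) ^ 2 := by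

  have h2 : Differentiable ℝ A ∧ ContDiff ℝ 1 (deriv A) := by
    rw [show (2 : WithTop ℕ∞) = 1 + 1 from by norm_num, contDiff_succ_iff_deriv] at hA
    exact ⟨hA.1, hA.2.2⟩
  have hAd : Differentiable ℝ A := h2.1
  have hDd : Differentiable ℝ (deriv A) := h2.2.differentiable one_ne_zero
  have hd1 : ∀ (t : ℝ) (i j : Fin 2), HasDerivAt (fun s => A s i j) (deriv A t i j) t :=
    fun t i j => hasDerivAt_entry (hAd t).hasDerivAt i j
  have hd2 : ∀ (t : ℝ) (i j : Fin 2),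
      HasDerivAt (fun s => deriv A s i j) (deriv (deriv A) t i j) t :=
    fun t i j => hasDerivAt_entry (hDd t).hasDerivAt i j
  -- entrywise det = 1
  have hr1 : ∀ t : ℝ, A t 0 0 * A t 1 1 - A t 0 1 * A t 1 0 = 1 := by
    intro t; rw [← Matrix.det_fin_two (A t)]; exact hdet t
  -- first derivative of det
  have hr2 : ∀ t : ℝ, deriv A t 0 0 * A t 1 1 + A t 0 0 * deriv A t 1 1
      - (deriv A t 0 1 * A t 1 0 + A t 0 1 * deriv A t 1 0) = 0 := by
    intro t
    have h : HasDerivAt (fun s => A s 0 0 * A s 1 1 - A s 0 1 * A s 1 0)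
        (deriv A t 0 0 * A t 1 1 + A t 0 0 * deriv A t 1 1
          - (deriv A t 0 1 * A t 1 0 + A t 0 1 * deriv A t 1 0)) t :=
      ((hd1 t 0 0).mul (hd1 t 1 1)).sub ((hd1 t 0 1).mul (hd1 t 1 0))
    have he : (fun s => A s 0 0 * A s 1 1 - A s 0 1 * A s 1 0) = fun _ => (1:ℝ) :=
      funext fun s => hr1 s
    rw [he] at h
    exact h.unique (hasDerivAt_const t 1)
  -- second derivative of det
  have hr3 : ∀ t : ℝ,
      deriv (deriv A) t 0 0 * A t 1 1 + deriv A t 0 0 * deriv A t 1 1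
        + (deriv A t 0 0 * deriv A t 1 1 + A t 0 0 * deriv (deriv A) t 1 1)
      - (deriv (deriv A) t 0 1 * A t 1 0 + deriv A t 0 1 * deriv A t 1 0
        + (deriv A t 0 1 * deriv A t 1 0 + A t 0 1 * deriv (deriv A) t 1 0)) = 0 := by
    intro t
    have h : HasDerivAt (fun s => deriv A s 0 0 * A s 1 1 + A s 0 0 * deriv A s 1 1
        - (deriv A s 0 1 * A s 1 0 + A s 0 1 * deriv A s 1 0))
        (deriv (deriv A) t 0 0 * A t 1 1 + deriv A t 0 0 * deriv A t 1 1
          + (deriv A t 0 0 * deriv A t 1 1 + A t 0 0 * deriv (deriv A) t 1 1)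
        - (deriv (deriv A) t 0 1 * A t 1 0 + deriv A t 0 1 * deriv A t 1 0
          + (deriv A t 0 1 * deriv A t 1 0 + A t 0 1 * deriv (deriv A) t 1 0))) t :=
      (((hd2 t 0 0).mul (hd1 t 1 1)).add ((hd1 t 0 0).mul (hd2 t 1 1))).sub
        (((hd2 t 0 1).mul (hd1 t 1 0)).add ((hd1 t 0 1).mul (hd2 t 1 0)))
    have he : (fun s => deriv A s 0 0 * A s 1 1 + A s 0 0 * deriv A s 1 1
        - (deriv A s 0 1 * A s 1 0 + A s 0 1 * deriv A s 1 0)) = fun _ => (0:ℝ) := by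
      funext s
      have := hr2 s; linarith
    rw [he] at h
    exact h.unique (hasDerivAt_const t 0)

  -- ODE entrywise
  have ho : ∀ (t : ℝ) (i j : Fin 2),
      deriv (deriv A) t i j + κ * A t i j = lam t * cofm (A t) i j := by
    intro t i j
    have h := congrFun (congrFun (hode t) i) j
    simpa [Matrix.add_apply, Matrix.smul_apply, smul_eq_mul] using h
  have ho00 : ∀ t : ℝ, deriv (deriv A) t 0 0 + κ * A t 0 0 = lam t * A t 1 1 := by
    intro t; have := ho t 0 0; simpa [cofm] using this
  have ho01 : ∀ t : ℝ, deriv (deriv A) t 0 1 + κ * A t 0 1 = -(lam t * A t 1 0) := by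
    intro t; have := ho t 0 1; simpa [cofm] using this
  have ho10 : ∀ t : ℝ, deriv (deriv A) t 1 0 + κ * A t 1 0 = -(lam t * A t 0 1) := by
    intro t; have := ho t 1 0; simpa [cofm] using this
  have ho11 : ∀ t : ℝ, deriv (deriv A) t 1 1 + κ * A t 1 1 = lam t * A t 0 0 := by
    intro t; have := ho t 1 1; simpa [cofm] using this
  -- lam * |A|^2 = 2κ - 2 det A'
  have hD : ∀ t : ℝ, lam t * (A t 0 0 ^ 2 + A t 0 1 ^ 2 + A t 1 0 ^ 2 + A t 1 1 ^ 2)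
      = 2 * κ - 2 * (deriv A t 0 0 * deriv A t 1 1 - deriv A t 0 1 * deriv A t 1 0) := by
    intro t
    linear_combination (-(A t 1 1)) * ho00 t - (A t 0 0) * ho11 t + (A t 1 0) * ho01 t
      + (A t 0 1) * ho10 t + hr3 t + 2 * κ * hr1 t

  -- the conserved quantity F
  have hP : ∀ s : ℝ, HasDerivAt
      (fun u => 2*κ - 2*(deriv A u 0 0 * deriv A u 1 1 - deriv A u 0 1 * deriv A u 1 0))
      (-(2*((deriv (deriv A) s 0 0 * deriv A s 1 1 + deriv A s 0 0 * deriv (deriv A) s 1 1)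
        - (deriv (deriv A) s 0 1 * deriv A s 1 0 + deriv A s 0 1 * deriv (deriv A) s 1 0)))) s := by
    intro s
    have h := (((hd2 s 0 0).fun_mul (hd2 s 1 1)).fun_sub ((hd2 s 0 1).fun_mul (hd2 s 1 0))).const_mul (2:ℝ)
    have h2' := (hasDerivAt_const s (2*κ)).fun_sub h
    exact h2'.congr_deriv (by ring)
  have hQ : ∀ s : ℝ, HasDerivAt
      (fun u => A u 0 0 ^ 2 + A u 0 1 ^ 2 + A u 1 0 ^ 2 + A u 1 1 ^ 2)
      (2 * A s 0 0 * deriv A s 0 0 + 2 * A s 0 1 * deriv A s 0 1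
        + 2 * A s 1 0 * deriv A s 1 0 + 2 * A s 1 1 * deriv A s 1 1) s := by
    intro s
    have h := ((((hd1 s 0 0).fun_pow 2).fun_add ((hd1 s 0 1).fun_pow 2)).fun_add
      ((hd1 s 1 0).fun_pow 2)).fun_add ((hd1 s 1 1).fun_pow 2)
    exact h.congr_deriv (by push_cast; ring)
  have hconst : ∀ x y : ℝ,
      (fun u => (2*κ - 2*(deriv A u 0 0 * deriv A u 1 1 - deriv A u 0 1 * deriv A u 1 0))
        * (A u 0 0 ^ 2 + A u 0 1 ^ 2 + A u 1 0 ^ 2 + A u 1 1 ^ 2)) x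
      = (fun u => (2*κ - 2*(deriv A u 0 0 * deriv A u 1 1 - deriv A u 0 1 * deriv A u 1 0))
        * (A u 0 0 ^ 2 + A u 0 1 ^ 2 + A u 1 0 ^ 2 + A u 1 1 ^ 2)) y := by
    apply is_const_of_deriv_eq_zero
    · exact fun s => ((hP s).mul (hQ s)).differentiableAt
    · intro s
      rw [((hP s).fun_mul (hQ s)).deriv]
      linear_combination
        (-(2*(A s 0 0 ^ 2 + A s 0 1 ^ 2 + A s 1 0 ^ 2 + A s 1 1 ^ 2) * deriv A s 1 1)) * ho00 s
        + (-(2*(A s 0 0 ^ 2 + A s 0 1 ^ 2 + A s 1 0 ^ 2 + A s 1 1 ^ 2) * deriv A s 0 0)) * ho11 s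
        + (2*(A s 0 0 ^ 2 + A s 0 1 ^ 2 + A s 1 0 ^ 2 + A s 1 1 ^ 2) * deriv A s 1 0) * ho01 s
        + (2*(A s 0 0 ^ 2 + A s 0 1 ^ 2 + A s 1 0 ^ 2 + A s 1 1 ^ 2) * deriv A s 0 1) * ho10 s
        + (2*(A s 0 0 ^ 2 + A s 0 1 ^ 2 + A s 1 0 ^ 2 + A s 1 1 ^ 2) * κ) * hr2 s
        + (-(2*(A s 0 0 * deriv A s 0 0 + A s 0 1 * deriv A s 0 1
            + A s 1 0 * deriv A s 1 0 + A s 1 1 * deriv A s 1 1))) * hD s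

  intro t
  have hmip : mip (A t) (A t) = A t 0 0 ^ 2 + A t 0 1 ^ 2 + A t 1 0 ^ 2 + A t 1 1 ^ 2 := by
    rw [mip_entries]; ring
  have hpos : 0 < A t 0 0 ^ 2 + A t 0 1 ^ 2 + A t 1 0 ^ 2 + A t 1 1 ^ 2 := by
    nlinarith [hr1 t, sq_nonneg (A t 0 0 - A t 1 1), sq_nonneg (A t 0 1 + A t 1 0)]
  rw [hmip, X1_entries, X2_entries, X3_entries, eq_div_iff (by positivity)]
  have hF0 := hconst t 0
  simp only [] at hF0
  linear_combination (A t 0 0 ^ 2 + A t 0 1 ^ 2 + A t 1 0 ^ 2 + A t 1 1 ^ 2) * hD t + hF0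
    + (2 * (deriv A 0 0 0 ^ 2 + deriv A 0 0 1 ^ 2 + deriv A 0 1 0 ^ 2 + deriv A 0 1 1 ^ 2)) * hr1 0
    + (-(2 * (A 0 0 0 * deriv A 0 0 0 + A 0 0 1 * deriv A 0 0 1
        + A 0 1 0 * deriv A 0 1 0 + A 0 1 1 * deriv A 0 1 1))) * hr2 0
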